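/- Let S be a set of relations among coin-toss bits C_0, C_1, …, each relation of the form C_i = C_j or C_i ≠ C_j with i < j, with at most one relation per pair (i,j). If the graph on the index set with an edge {i,j} for each relation in S is acyclic, then for independent fair coin bits the probability that all relations in S hold equals 2^{−|S|}. -/

import Mathlib

open SimpleGraph

/-- Let `S` be a set of relations among fair coin bits `C_0, …, C_{M-1}`, each
of the form `C_i = C_j` (when `b (i,j) = true`) or `C_i ≠ C_j` (when
`b (i,j) = false`) with `i < j`, at most one relation per pair. If the graph
with an edge `{i,j}` for each relation in `S` is acyclic, then the probability
that all relations hold is `2^{-|S|}`: the number of bit assignments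
satisfying `S`, times `2^{|S|}`, is `2^M`. -/
theorem stmt8 (M : ℕ) (S : Finset (Fin M × Fin M)) (b : Fin M × Fin M → Bool)
    (hlt : ∀ p ∈ S, p.1 < p.2)
    (hacyclic : (SimpleGraph.fromRel (fun i j : Fin M => (i, j) ∈ S)).IsAcyclic) :
    ((Finset.univ : Finset (Fin M → Bool)).filter
        (fun C => ∀ p ∈ S, ((C p.1 = C p.2) ↔ b p = true))).card * 2 ^ S.card
      = 2 ^ M := by
  classical
  induction' hn : S.card with n ih generalizing S
  case zero =>
    rw [Finset.card_eq_zero] at hn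
    subst hn
    simp [Finset.card_univ]
  case succ =>
    obtain ⟨p, hp⟩ : S.Nonempty := Finset.card_pos.mp (by omega)
    set T := S.erase p with hT
    have hTcard : T.card = n := by rw [hT, Finset.card_erase_of_mem hp, hn]; omega
    have hTsub : T ⊆ S := Finset.erase_subset _ _
    have hlt' : ∀ q ∈ T, q.1 < q.2 := fun q hq => hlt q (hTsub hq)
    set G := SimpleGraph.fromRel (fun i j : Fin M => (i, j) ∈ S) with hG
    set G' := SimpleGraph.fromRel (fun i j : Fin M => (i, j) ∈ T) with hG'
    have hle : G' ≤ G := by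
      intro v w hvw
      rw [hG', fromRel_adj] at hvw
      rw [hG, fromRel_adj]
      exact ⟨hvw.1, hvw.2.imp (fun h => hTsub h) (fun h => hTsub h)⟩
    have hacyclic' : G'.IsAcyclic := fun v c hc =>
      hacyclic (c.mapLe hle) (hc.mapLe hle)
    have hpne : p.1 ≠ p.2 := Fin.ne_of_lt (hlt p hp)
    have hadj : G.Adj p.1 p.2 := by
      rw [hG, fromRel_adj]; exact ⟨hpne, Or.inl (by simpa using hp)⟩
    have hbridge := (isAcyclic_iff_forall_adj_isBridge.mp hacyclic) hadj
    rw [isBridge_iff] at hbridge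
    have hGeq : G \ SimpleGraph.fromEdgeSet {s(p.1, p.2)} = G' := by
      ext v w
      simp only [SimpleGraph.sdiff_adj, hG, hG', fromRel_adj, fromEdgeSet_adj,
        Set.mem_singleton_iff, Sym2.eq, Sym2.rel_iff', Prod.mk.injEq, Prod.swap_prod_mk]
      constructor
      · rintro ⟨⟨hne, hvw⟩, hne2⟩
        refine ⟨hne, ?_⟩
        rcases hvw with h | h
        · left
          refine Finset.mem_erase.mpr ⟨?_, h⟩
          rintro rfl
          exact hne2 ⟨Or.inl ⟨rfl, rfl⟩, hne⟩
        · right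
          refine Finset.mem_erase.mpr ⟨?_, h⟩
          rintro rfl
          exact hne2 ⟨Or.inr ⟨rfl, rfl⟩, hne⟩
      · rintro ⟨hne, hvw⟩
        refine ⟨⟨hne, hvw.imp (fun h => hTsub h) (fun h => hTsub h)⟩, ?_⟩
        rintro ⟨h | h, -⟩
        · obtain ⟨h1, h2⟩ := h
          rcases hvw with h' | h'
          · exact (Finset.mem_erase.mp h').1 (by subst h1; subst h2; rfl)
          · have hq : p.2 < p.1 := by subst h1; subst h2; exact hlt' _ h'
            exact absurd (hlt p hp) (by omega)
        · obtain ⟨h1, h2⟩ := h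
          rcases hvw with h' | h'
          · have hq : p.2 < p.1 := by subst h1; subst h2; exact hlt' _ h'
            exact absurd (hlt p hp) (by omega)
          · exact (Finset.mem_erase.mp h').1 (by subst h1; subst h2; rfl)
    change ¬ (G \ SimpleGraph.fromEdgeSet {s(p.1, p.2)}).Reachable p.1 p.2 at hbridge
    rw [hGeq] at hbridge
    have hnr : ¬ G'.Reachable p.1 p.2 := hbridge
    -- the flip map
    set f : (Fin M → Bool) → (Fin M → Bool) :=
      fun C v => if G'.Reachable p.2 v then !C v else !!C v with hf
    have hf1 : ∀ C, f C p.1 = C p.1 := by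
      intro C
      rw [hf]
      simp only
      rw [if_neg (fun h => hnr h.symm), Bool.not_not]
    have hf2 : ∀ C, f C p.2 = !C p.2 := by
      intro C
      rw [hf]; simp only
      rw [if_pos (SimpleGraph.Reachable.refl _)]
    have hfT : ∀ C, ∀ q ∈ T, (f C q.1 = f C q.2) ↔ (C q.1 = C q.2) := by
      intro C q hq
      have hadjq : G'.Adj q.1 q.2 := by
        rw [hG', fromRel_adj]
        exact ⟨Fin.ne_of_lt (hlt' q hq), Or.inl (by simpa using hq)⟩
      have hreq : G'.Reachable p.2 q.1 ↔ G'.Reachable p.2 q.2 :=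
        ⟨fun h => h.trans hadjq.reachable, fun h => h.trans hadjq.symm.reachable⟩
      rw [hf]; simp only
      by_cases h : G'.Reachable p.2 q.1
      · rw [if_pos h, if_pos (hreq.mp h)]
        cases C q.1 <;> cases C q.2 <;> simp
      · rw [if_neg h, if_neg (fun h' => h (hreq.mpr h'))]
        cases C q.1 <;> cases C q.2 <;> simp
    have hff : ∀ C, f (f C) = C := by
      intro C; funext v
      rw [hf]; simp only
      by_cases h : G'.Reachable p.2 v <;> simp [h]
    -- split the count
    have hS : S = insert p T := (Finset.insert_erase hp).symm
    set pcon : (Fin M → Bool) → Prop := fun C => ((C p.1 = C p.2) ↔ b p = true) with hpcon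
    set A := (Finset.univ : Finset (Fin M → Bool)).filter
        (fun C => ∀ q ∈ S, ((C q.1 = C q.2) ↔ b q = true)) with hA
    set B := (Finset.univ : Finset (Fin M → Bool)).filter
        (fun C => ∀ q ∈ T, ((C q.1 = C q.2) ↔ b q = true)) with hB
    have hBsplit : B.filter pcon = A := by
      rw [hA, hB, Finset.filter_filter]
      congr 1
      funext C
      rw [eq_iff_iff, hS, Finset.forall_mem_insert]
      exact ⟨fun ⟨h1, h2⟩ => ⟨h2, h1⟩, fun ⟨h1, h2⟩ => ⟨h2, h1⟩⟩
    have hcard2 : (B.filter (fun C => ¬ pcon C)).card = A.card := by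
      rw [← hBsplit]
      apply Finset.card_bij (fun C _ => f C)
      · intro C hC
        simp only [hB, Finset.mem_filter, Finset.mem_univ, true_and] at hC ⊢
        obtain ⟨hCT, hCnp⟩ := hC
        refine ⟨fun q hq => (hfT C q hq).trans (hCT q hq), ?_⟩
        have hCnp' : ¬(C p.1 = C p.2 ↔ b p = true) := hCnp
        show f C p.1 = f C p.2 ↔ b p = true
        simp only [hf1, hf2]
        revert hCnp'
        cases b p <;> cases C p.1 <;> cases C p.2 <;> simp
      · intro C1 h1 C2 h2 heq
        have := congrArg f heq
        rwa [hff, hff] at this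
      · intro D hD
        refine ⟨f D, ?_, hff D⟩
        simp only [hB, Finset.mem_filter, Finset.mem_univ, true_and] at hD ⊢
        obtain ⟨hDT, hDp⟩ := hD
        refine ⟨fun q hq => (hfT D q hq).trans (hDT q hq), ?_⟩
        have hDp' : D p.1 = D p.2 ↔ b p = true := hDp
        show ¬(f D p.1 = f D p.2 ↔ b p = true)
        simp only [hf1, hf2]
        revert hDp'
        cases b p <;> cases D p.1 <;> cases D p.2 <;> simp
    have hBcard : B.card = 2 * A.card := by
      rw [← Finset.card_filter_add_card_filter_not (p := pcon) (s := B), hBsplit, hcard2]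
      omega
    have hih := ih T hlt' hacyclic' hTcard
    rw [pow_succ, ← mul_assoc]
    calc A.card * 2 ^ n * 2 = A.card * 2 * 2 ^ n := by ring
    _ = B.card * 2 ^ n := by rw [hBcard]; ring
    _ = 2 ^ M := hih
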